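/- Let R be the subalgebra of UT_6(F) of matrices with diagonal (0,a,b,c,a,0) and possibly nonzero entries in positions (1,2),(1,3),(1,4),(1,5),(1,6),(2,3),(2,6),(3,6),(4,5),(4,6),(5,6). Then R is closed under the reflection involution θ_6, its center is Z(R) = F·e_{16}, and [x_1^+,x_2^+][x_3^+,x_4^+][x_5^+,x_6^+] is a proper central *-polynomial for (R, θ_6): every such product of three commutators of θ_6-symmetric elements of R lies in F·e_{16}, and some such product is nonzero. -/

import Mathlib

open Matrix

/-- The reflection involution `θ_6` on `M_6(F)`. -/
def reflInv {F : Type*} [Field F] (A : Matrix (Fin 6) (Fin 6) F) :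
    Matrix (Fin 6) (Fin 6) F :=
  Matrix.of fun i j => A j.rev i.rev

/-- Membership in the algebra `R ⊆ UT_6(F)`: upper triangular with diagonal
`(0,a,b,c,a,0)` and entries `(2,4),(2,5),(3,4),(3,5)` (1-indexed) equal to zero. -/
def memR {F : Type*} [Field F] (M : Matrix (Fin 6) (Fin 6) F) : Prop :=
  (∀ i j : Fin 6, j < i → M i j = 0) ∧
  M 0 0 = 0 ∧ M 5 5 = 0 ∧ M 1 1 = M 4 4 ∧
  M 1 3 = 0 ∧ M 1 4 = 0 ∧ M 2 3 = 0 ∧ M 2 4 = 0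

@[simp] lemma myConsValFive {α : Type*} {m : ℕ} (x : α) (u : Fin (m+5) → α) :
    Matrix.vecCons x u 5 = u 4 := rfl

section Aux
variable {F : Type*} [Field F]

/-- generic `θ₆`-symmetric member of `R` -/
def symMat (a b p q r s t u : F) : Matrix (Fin 6) (Fin 6) F :=
  !![0,p,q,r,s,t;
     0,a,u,0,0,s;
     0,0,b,0,0,r;
     0,0,0,b,u,q;
     0,0,0,0,a,p;
     0,0,0,0,0,0]

/-- generic commutator of two symmetric members of `R` -/
def commK (α β γ δ ε : F) : Matrix (Fin 6) (Fin 6) F :=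
  !![0,α,β,γ,ε,0;
     0,0,δ,0,0,-ε;
     0,0,0,0,0,-γ;
     0,0,0,0,-δ,-β;
     0,0,0,0,0,-α;
     0,0,0,0,0,0]

set_option maxHeartbeats 1000000 in
lemma symParam (M : Matrix (Fin 6) (Fin 6) F) (hM : memR M) (hs : reflInv M = M) :
    M = symMat (M 1 1) (M 2 2) (M 0 1) (M 0 2) (M 0 3) (M 0 4) (M 0 5) (M 1 2) := by
  obtain ⟨hlow, h00, h55, hd, z13, z14, z23, z24⟩ := hM
  have h33 : M 3 3 = M 2 2 := congrFun (congrFun hs 2) 2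
  have h45 : M 4 5 = M 0 1 := congrFun (congrFun hs 0) 1
  have h35 : M 3 5 = M 0 2 := congrFun (congrFun hs 0) 2
  have h25 : M 2 5 = M 0 3 := congrFun (congrFun hs 0) 3
  have h15 : M 1 5 = M 0 4 := congrFun (congrFun hs 0) 4
  have h34 : M 3 4 = M 1 2 := congrFun (congrFun hs 1) 2
  ext i j
  fin_cases i <;> fin_cases j <;>
    simp only [symMat, Fin.reduceFinMk, Fin.isValue, Matrix.cons_val', Matrix.cons_val_zero,
      Matrix.cons_val_one, Matrix.head_cons, Matrix.cons_val_two, Matrix.cons_val_three,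
      Matrix.cons_val_four, myConsValFive, Matrix.vecHead, Matrix.vecTail, Matrix.empty_val',
      Matrix.cons_val_fin_one, Matrix.of_apply, Function.comp_apply, Matrix.cons_val_succ,
      Fin.zero_eta] <;>
    first
      | rfl
      | assumption
      | exact hd.symm
      | exact hlow _ _ (by decide)

set_option maxHeartbeats 1000000 in
lemma comm_symMat (a b p q r s t u a' b' p' q' r' s' t' u' : F) :
    symMat a b p q r s t u * symMat a' b' p' q' r' s' t' u' -
      symMat a' b' p' q' r' s' t' u' * symMat a b p q r s t u =
    commK (p*a'-a*p') (p*u'+q*b'-u*p'-b*q') (r*b'-b*r')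
      (a*u'+u*b'-u*a'-b*u') (r*u'+s*a'-u*r'-a*s') := by
  ext i j
  fin_cases i <;> fin_cases j <;>
    simp only [symMat, commK, Fin.reduceFinMk, Fin.isValue, Matrix.sub_apply, Matrix.mul_apply,
      Fin.sum_univ_six, Matrix.cons_val', Matrix.cons_val_zero, Matrix.cons_val_one,
      Matrix.head_cons, Matrix.cons_val_two, Matrix.cons_val_three, Matrix.cons_val_four,
      myConsValFive, Matrix.vecHead, Matrix.vecTail, Matrix.empty_val', Matrix.cons_val_fin_one,
      Matrix.of_apply, Function.comp_apply, Matrix.cons_val_succ] <;>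
    ring

set_option maxHeartbeats 1000000 in
lemma commK_mul (α β γ δ ε α' β' γ' δ' ε' α'' β'' γ'' δ'' ε'' : F) :
    commK α β γ δ ε * commK α' β' γ' δ' ε' * commK α'' β'' γ'' δ'' ε'' =
      (γ*δ'*α'' - α*δ'*γ'') • Matrix.single 0 5 (1 : F) := by
  ext i j
  fin_cases i <;> fin_cases j <;>
    simp only [commK, Matrix.single, Fin.reduceFinMk, Fin.isValue, Matrix.smul_apply,
      Matrix.mul_apply, Fin.sum_univ_six, Matrix.cons_val', Matrix.cons_val_zero,
      Matrix.cons_val_one, Matrix.head_cons, Matrix.cons_val_two, Matrix.cons_val_three,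
      Matrix.cons_val_four, myConsValFive, Matrix.vecHead, Matrix.vecTail, Matrix.empty_val',
      Matrix.cons_val_fin_one, Matrix.of_apply, Function.comp_apply, Matrix.cons_val_succ,
      Fin.reduceEq, and_true, and_false, if_true, if_false, smul_eq_mul, mul_one, and_self,
      Fin.zero_eta] <;>
    ring

lemma memR_symMat (a b p q r s t u : F) : memR (symMat a b p q r s t u) := by
  refine ⟨?_, rfl, rfl, rfl, rfl, rfl, rfl, rfl⟩
  intro i j h
  fin_cases i <;> fin_cases j <;> first | rfl | exact absurd h (by decide)

lemma reflInv_symMat (a b p q r s t u : F) :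
    reflInv (symMat a b p q r s t u) = symMat a b p q r s t u := by
  ext i j
  fin_cases i <;> fin_cases j <;> rfl

end Aux

set_option maxHeartbeats 2000000 in
/-- `R` is closed under `θ_6`, `Z(R) = F·e_{16}`, and
`[x₁⁺,x₂⁺][x₃⁺,x₄⁺][x₅⁺,x₆⁺]` is a proper central `*`-polynomial for `(R, θ_6)`. -/
theorem stmt_19 (F : Type*) [Field F] [CharZero F] :
    (∀ M : Matrix (Fin 6) (Fin 6) F, memR M → memR (reflInv M)) ∧
    (∀ M : Matrix (Fin 6) (Fin 6) F, memR M →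
      ((∀ X : Matrix (Fin 6) (Fin 6) F, memR X → M * X = X * M) ↔
        ∃ c : F, M = c • Matrix.single 0 5 (1 : F))) ∧
    (∀ A₁ A₂ A₃ A₄ A₅ A₆ : Matrix (Fin 6) (Fin 6) F,
      memR A₁ → memR A₂ → memR A₃ → memR A₄ → memR A₅ → memR A₆ →
      reflInv A₁ = A₁ → reflInv A₂ = A₂ → reflInv A₃ = A₃ →
      reflInv A₄ = A₄ → reflInv A₅ = A₅ → reflInv A₆ = A₆ →
      ∃ c : F, (A₁ * A₂ - A₂ * A₁) * (A₃ * A₄ - A₄ * A₃) * (A₅ * A₆ - A₆ * A₅) =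
        c • Matrix.single 0 5 (1 : F)) ∧
    (∃ A₁ A₂ A₃ A₄ A₅ A₆ : Matrix (Fin 6) (Fin 6) F,
      memR A₁ ∧ memR A₂ ∧ memR A₃ ∧ memR A₄ ∧ memR A₅ ∧ memR A₆ ∧
      reflInv A₁ = A₁ ∧ reflInv A₂ = A₂ ∧ reflInv A₃ = A₃ ∧
      reflInv A₄ = A₄ ∧ reflInv A₅ = A₅ ∧ reflInv A₆ = A₆ ∧
      (A₁ * A₂ - A₂ * A₁) * (A₃ * A₄ - A₄ * A₃) * (A₅ * A₆ - A₆ * A₅) ≠ 0) := by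
  refine ⟨?_, ?_, ?_, ?_⟩
  · -- closure under θ₆
    rintro M ⟨hlow, h00, h55, hd, z13, z14, z23, z24⟩
    refine ⟨?_, h55, h00, hd.symm, z24, z14, z23, z13⟩
    intro i j hij
    exact hlow _ _ (by simpa using Fin.rev_lt_rev.mpr hij)
  · -- center
    intro M hM
    obtain ⟨hlow, h00, h55, hd, z13, z14, z23, z24⟩ := hM
    constructor
    · intro hc
      -- plug in specific elements of R
      have mem1 : memR (!![0,1,0,0,0,0;0,0,0,0,0,0;0,0,0,0,0,0;0,0,0,0,0,0;0,0,0,0,0,0;0,0,0,0,0,(0:F)]) := by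
        refine ⟨?_, rfl, rfl, rfl, rfl, rfl, rfl, rfl⟩
        intro i j h; fin_cases i <;> fin_cases j <;> first | rfl | exact absurd h (by decide)
      have mem2 : memR (!![0,0,0,0,0,0;0,0,0,0,0,0;0,0,0,0,0,0;0,0,0,0,0,0;0,0,0,0,0,1;0,0,0,0,0,(0:F)]) := by
        refine ⟨?_, rfl, rfl, rfl, rfl, rfl, rfl, rfl⟩
        intro i j h; fin_cases i <;> fin_cases j <;> first | rfl | exact absurd h (by decide)
      have mem3 : memR (!![0,0,0,0,0,0;0,0,1,0,0,0;0,0,0,0,0,0;0,0,0,0,0,0;0,0,0,0,0,0;0,0,0,0,0,(0:F)]) := by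
        refine ⟨?_, rfl, rfl, rfl, rfl, rfl, rfl, rfl⟩
        intro i j h; fin_cases i <;> fin_cases j <;> first | rfl | exact absurd h (by decide)
      have mem4 : memR (!![0,0,0,0,0,0;0,0,0,0,0,0;0,0,0,0,0,0;0,0,0,0,1,0;0,0,0,0,0,0;0,0,0,0,0,(0:F)]) := by
        refine ⟨?_, rfl, rfl, rfl, rfl, rfl, rfl, rfl⟩
        intro i j h; fin_cases i <;> fin_cases j <;> first | rfl | exact absurd h (by decide)
      have mem5 : memR (!![0,0,0,0,0,0;0,0,0,0,0,0;0,0,0,0,0,1;0,0,0,0,0,0;0,0,0,0,0,0;0,0,0,0,0,(0:F)]) := by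
        refine ⟨?_, rfl, rfl, rfl, rfl, rfl, rfl, rfl⟩
        intro i j h; fin_cases i <;> fin_cases j <;> first | rfl | exact absurd h (by decide)
      have mem6 : memR (!![0,0,0,0,0,0;0,0,0,0,0,0;0,0,0,0,0,0;0,0,0,1,0,0;0,0,0,0,0,0;0,0,0,0,0,(0:F)]) := by
        refine ⟨?_, rfl, rfl, rfl, rfl, rfl, rfl, rfl⟩
        intro i j h; fin_cases i <;> fin_cases j <;> first | rfl | exact absurd h (by decide)
      have e1 := hc _ mem1
      have e2 := hc _ mem2
      have e3 := hc _ mem3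
      have e4 := hc _ mem4
      have e5 := hc _ mem5
      have e6 := hc _ mem6
      have q11 : M 1 1 = 0 := by
        have := congrFun (congrFun e1 0) 1
        simp [Matrix.mul_apply, Fin.sum_univ_six, Matrix.vecHead, Matrix.vecTail, h00] at this
        exact this.symm
      have q12 : M 1 2 = 0 := by
        have := congrFun (congrFun e1 0) 2
        simpa [Matrix.mul_apply, Fin.sum_univ_six, Matrix.vecHead, Matrix.vecTail] using this.symm
      have q15 : M 1 5 = 0 := by
        have := congrFun (congrFun e1 0) 5
        simpa [Matrix.mul_apply, Fin.sum_univ_six, Matrix.vecHead, Matrix.vecTail] using this.symm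
      have q04 : M 0 4 = 0 := by
        have := congrFun (congrFun e2 0) 5
        simpa [Matrix.mul_apply, Fin.sum_univ_six, Matrix.vecHead, Matrix.vecTail,
          hlow 5 4 (by decide)] using this
      have q34 : M 3 4 = 0 := by
        have := congrFun (congrFun e2 3) 5
        simpa [Matrix.mul_apply, Fin.sum_univ_six, Matrix.vecHead, Matrix.vecTail,
          hlow 5 4 (by decide), h55, hlow 5 3 (by decide)] using this
      have q01 : M 0 1 = 0 := by
        have := congrFun (congrFun e3 0) 2
        simpa [Matrix.mul_apply, Fin.sum_univ_six, Matrix.vecHead, Matrix.vecTail,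
          hlow 2 1 (by decide)] using this
      have q22 : M 2 2 = 0 := by
        have := congrFun (congrFun e3 1) 2
        simp [Matrix.mul_apply, Fin.sum_univ_six, Matrix.vecHead, Matrix.vecTail,
          q11, hlow 2 1 (by decide)] at this
        exact this.symm
      have q25 : M 2 5 = 0 := by
        have := congrFun (congrFun e3 1) 5
        simpa [Matrix.mul_apply, Fin.sum_univ_six, Matrix.vecHead, Matrix.vecTail,
          q15, hlow 2 1 (by decide)] using this.symm
      have q03 : M 0 3 = 0 := by
        have := congrFun (congrFun e4 0) 4
        simpa [Matrix.mul_apply, Fin.sum_univ_six, Matrix.vecHead, Matrix.vecTail,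
          hlow 4 3 (by decide), q04] using this
      have h44 : M 4 4 = 0 := hd ▸ q11
      have q33 : M 3 3 = 0 := by
        have := congrFun (congrFun e4 3) 4
        simpa [Matrix.mul_apply, Fin.sum_univ_six, Matrix.vecHead, Matrix.vecTail,
          hlow 4 3 (by decide), h44] using this
      have q45 : M 4 5 = 0 := by
        have := congrFun (congrFun e4 3) 5
        simpa [Matrix.mul_apply, Fin.sum_univ_six, Matrix.vecHead, Matrix.vecTail,
          hlow 4 3 (by decide), hlow 5 3 (by decide), hlow 5 4 (by decide)] using this.symm
      have q02 : M 0 2 = 0 := by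
        have := congrFun (congrFun e5 0) 5
        simpa [Matrix.mul_apply, Fin.sum_univ_six, Matrix.vecHead, Matrix.vecTail,
          hlow 2 0 (by decide), hlow 2 1 (by decide), h55] using this
      have q35 : M 3 5 = 0 := by
        have := congrFun (congrFun e6 3) 5
        simpa [Matrix.mul_apply, Fin.sum_univ_six, Matrix.vecHead, Matrix.vecTail,
          q33, hlow 5 3 (by decide)] using this.symm
      refine ⟨M 0 5, ?_⟩
      ext i j
      fin_cases i <;> fin_cases j <;>
        simp only [Matrix.single, Matrix.smul_apply, Matrix.of_apply, Fin.reduceFinMk,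
          Fin.isValue, Fin.reduceEq, Fin.zero_eta, and_true, and_false, false_and, if_true,
          if_false, smul_eq_mul, mul_one, mul_zero, and_self, smul_zero] <;>
        first
          | rfl
          | assumption
          | exact hlow _ _ (by decide)
    · rintro ⟨c, rfl⟩ X hX
      have r5 : ∀ j, X 5 j = 0 := by
        intro j
        fin_cases j <;> first | exact hX.1 5 _ (by decide) | exact hX.2.2.1
      have c0 : ∀ i, X i 0 = 0 := by
        intro i
        fin_cases i <;> first | exact hX.2.1 | exact hX.1 _ 0 (by decide)
      ext i j
      simp [Matrix.mul_apply, Fin.sum_univ_six, Matrix.single, r5, c0]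
  · -- centrality of the *-polynomial
    intro A₁ A₂ A₃ A₄ A₅ A₆ h₁ h₂ h₃ h₄ h₅ h₆ s₁ s₂ s₃ s₄ s₅ s₆
    rw [symParam A₁ h₁ s₁, symParam A₂ h₂ s₂, symParam A₃ h₃ s₃, symParam A₄ h₄ s₄,
      symParam A₅ h₅ s₅, symParam A₆ h₆ s₆, comm_symMat, comm_symMat, comm_symMat, commK_mul]
    exact ⟨_, rfl⟩
  · -- properness: explicit witness
    refine ⟨symMat 1 0 0 0 0 0 0 0, symMat 0 0 1 0 0 0 0 0, symMat 1 0 0 0 0 0 0 0,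
      symMat 0 0 0 0 0 0 0 1, symMat 0 1 0 0 0 0 0 0, symMat 0 0 0 0 1 0 0 0,
      memR_symMat _ _ _ _ _ _ _ _, memR_symMat _ _ _ _ _ _ _ _, memR_symMat _ _ _ _ _ _ _ _,
      memR_symMat _ _ _ _ _ _ _ _, memR_symMat _ _ _ _ _ _ _ _, memR_symMat _ _ _ _ _ _ _ _,
      reflInv_symMat _ _ _ _ _ _ _ _, reflInv_symMat _ _ _ _ _ _ _ _,
      reflInv_symMat _ _ _ _ _ _ _ _, reflInv_symMat _ _ _ _ _ _ _ _,
      reflInv_symMat _ _ _ _ _ _ _ _, reflInv_symMat _ _ _ _ _ _ _ _, ?_⟩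
    rw [comm_symMat, comm_symMat, comm_symMat, commK_mul]
    intro h
    have := congrFun (congrFun h 0) 5
    simp [Matrix.single] at this
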